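/- Let A, b, D, L_A, L_b be as above, and let U ⊆ ℝ^{n_u} be a set with ‖u‖_∞ ≤ M for all u ∈ U. Suppose that for every x ∈ D there exists u ∈ U with A(x)u + b(x) ≥ η·1 for some fixed η > 0. Define ρ̲ = 2η / (L_A · M + L_b). Then for every x ∈ D and every x′ ∈ D with ‖x − x′‖_∞ ≤ ρ̲/2, there exists u ∈ U with A(x′)u + b(x′) ≥ 0 componentwise. -/
import Mathlib


/-- `ℓ∞` norm of a vector. -/
noncomputable def vecNormInf {N : ℕ} (v : Fin N → ℝ) : ℝ := ⨆ i, |v i|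

/-- `ℓ∞ → ℓ∞` induced operator norm of a matrix (max absolute row sum). -/
noncomputable def matNormInf {N m : ℕ} (A : Matrix (Fin N) (Fin m) ℝ) : ℝ := ⨆ i, ∑ j, |A i j|

lemma abs_le_vecNormInf {N : ℕ} (v : Fin N → ℝ) (i : Fin N) : |v i| ≤ vecNormInf v := by
  unfold vecNormInf
  exact le_ciSup (Set.Finite.bddAbove (Set.finite_range fun k => |v k|)) i

lemma vecNormInf_nonneg {N : ℕ} (v : Fin N → ℝ) : 0 ≤ vecNormInf v :=
  Real.iSup_nonneg fun i => abs_nonneg _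

lemma rowSum_le_matNormInf {N m : ℕ} (B : Matrix (Fin N) (Fin m) ℝ) (i : Fin N) :
    ∑ j, |B i j| ≤ matNormInf B := by
  unfold matNormInf
  exact le_ciSup (Set.Finite.bddAbove (Set.finite_range fun k => ∑ j, |B k j|)) i

lemma abs_mulVec_le {N m : ℕ} (B : Matrix (Fin N) (Fin m) ℝ) (u : Fin m → ℝ) (i : Fin N) :
    |B.mulVec u i| ≤ matNormInf B * vecNormInf u := by
  have h1 : |B.mulVec u i| ≤ ∑ j, |B i j| * vecNormInf u := by
    rw [Matrix.mulVec, dotProduct]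
    calc |∑ j, B i j * u j| ≤ ∑ j, |B i j * u j| := Finset.abs_sum_le_sum_abs _ _
    _ ≤ ∑ j, |B i j| * vecNormInf u := by
        refine Finset.sum_le_sum fun j _ => ?_
        rw [abs_mul]
        exact mul_le_mul_of_nonneg_left (abs_le_vecNormInf u j) (abs_nonneg _)
  rw [← Finset.sum_mul] at h1
  exact h1.trans (mul_le_mul_of_nonneg_right (rowSum_le_matNormInf B i) (vecNormInf_nonneg u))

/-- robust compatibility with level `η` on `D` implies compatibility at every
point within `ℓ∞` distance `ρ̲/2 = η/(L_A M + L_b)` of a point of `D`. -/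
theorem robust_compatibility_margin {n nu N : ℕ}
    (D : Set (Fin n → ℝ)) (U : Set (Fin nu → ℝ)) (M : ℝ)
    (hU : ∀ u ∈ U, vecNormInf u ≤ M)
    (A : (Fin n → ℝ) → Matrix (Fin N) (Fin nu) ℝ)
    (b : (Fin n → ℝ) → (Fin N → ℝ))
    (LA Lb : ℝ)
    (hA : ∀ x ∈ D, ∀ x' ∈ D, matNormInf (A x - A x') ≤ LA * vecNormInf (x - x'))
    (hb : ∀ x ∈ D, ∀ x' ∈ D, vecNormInf (b x - b x') ≤ Lb * vecNormInf (x - x'))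
    (η : ℝ) (hη : 0 < η)
    (hpos : 0 < LA * M + Lb)
    (hrobust : ∀ x ∈ D, ∃ u ∈ U, ∀ i, η ≤ (A x).mulVec u i + b x i) :
    ∀ x ∈ D, ∀ x' ∈ D, vecNormInf (x - x') ≤ (2 * η / (LA * M + Lb)) / 2 →
      ∃ u ∈ U, ∀ i, 0 ≤ (A x').mulVec u i + b x' i := by
  intro x hx x' hx' hdist
  obtain ⟨u, hu, hmargin⟩ := hrobust x hx
  refine ⟨u, hu, fun i => ?_⟩
  set δ := vecNormInf (x - x') with hδ
  have hδ0 : 0 ≤ δ := vecNormInf_nonneg _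
  have hδle : δ ≤ η / (LA * M + Lb) := by
    have : (2 * η / (LA * M + Lb)) / 2 = η / (LA * M + Lb) := by ring
    linarith [hdist, this ▸ hdist]
  have hMnn : 0 ≤ M := le_trans (vecNormInf_nonneg u) (hU u hu)
  -- bound on matrix perturbation term
  have hB : |(A x - A x').mulVec u i| ≤ LA * δ * M := by
    have h1 := abs_mulVec_le (A x - A x') u i
    have h2 : matNormInf (A x - A x') * vecNormInf u ≤ (LA * δ) * M := by
      have hBnn : 0 ≤ matNormInf (A x - A x') :=
        le_trans (Finset.sum_nonneg fun j _ => abs_nonneg _)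
          (rowSum_le_matNormInf (A x - A x') ⟨0, by
            by_contra h
            push_neg at h
            interval_cases N
            · exact absurd i.2 (Nat.not_lt_zero _)⟩)
      calc matNormInf (A x - A x') * vecNormInf u
          ≤ matNormInf (A x - A x') * M :=
            mul_le_mul_of_nonneg_left (hU u hu) hBnn
        _ ≤ (LA * δ) * M := mul_le_mul_of_nonneg_right (hA x hx x' hx') hMnn
    exact h1.trans h2
  have hbnd : |b x i - b x' i| ≤ Lb * δ := by
    have := abs_le_vecNormInf (b x - b x') i
    simpa using this.trans (hb x hx x' hx')
  have hkey : (A x).mulVec u i - (A x').mulVec u i ≤ LA * δ * M := by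
    have : (A x - A x').mulVec u i = (A x).mulVec u i - (A x').mulVec u i := by
      simp [Matrix.sub_mulVec]
    linarith [le_abs_self ((A x - A x').mulVec u i), this ▸ le_abs_self ((A x - A x').mulVec u i)]
  have hbkey : b x i - b x' i ≤ Lb * δ := le_trans (le_abs_self _) hbnd
  have htot : (LA * M + Lb) * δ ≤ η := by
    calc (LA * M + Lb) * δ ≤ (LA * M + Lb) * (η / (LA * M + Lb)) :=
          mul_le_mul_of_nonneg_left hδle (le_of_lt hpos)
      _ = η := by field_simp
  nlinarith [hmargin i]
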